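/- Let b ∈ (0, +∞] and let (H, φ) solve the EdGB FLRW system on [0, b) with the negative-branch initial data with parameter β. Then H'(t) + (1/2)·H(t)^2 < 0 for all t ∈ [0, b). -/

import Mathlib

/-- The EdGB FLRW system on a set `I ⊆ ℝ`: `H` is continuously differentiable and
`φ` twice continuously differentiable on `I`, and for every `t ∈ I` the Hamiltonian
constraint `3H² − 3e^φ φ' H³ = φ'²/2` and the scalar field equation
`φ'' = −3Hφ' − 3e^φ H²(H² + H')` hold. -/
def EdGB (H φ : ℝ → ℝ) (I : Set ℝ) : Prop :=
  ContDiffOn ℝ 1 H I ∧ ContDiffOn ℝ 2 φ I ∧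
  (∀ t ∈ I, 3 * H t ^ 2 - 3 * Real.exp (φ t) * deriv φ t * H t ^ 3 = (deriv φ t) ^ 2 / 2) ∧
  (∀ t ∈ I, deriv (deriv φ) t =
      -3 * H t * deriv φ t - 3 * Real.exp (φ t) * H t ^ 2 * (H t ^ 2 + deriv H t))

/-- The negative-branch initial data with parameter `β`:
`H(0) = β`, `φ(0) = 0`, `φ'(0) = −3β³ − √(9β⁶ + 6β²)`, with `0 < β < √6/6`. -/
def NegBranchData (H φ : ℝ → ℝ) (β : ℝ) : Prop :=
  0 < β ∧ β < Real.sqrt 6 / 6 ∧ H 0 = β ∧ φ 0 = 0 ∧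
  deriv φ 0 = -3 * β ^ 3 - Real.sqrt (9 * β ^ 6 + 6 * β ^ 2)

open Real Set Filter Topology

private lemma edgb_psi_le {E a ψ : ℝ} (hE : 0 < E) (ha : 0 < a) (hψ : ψ < 0)
    (hcon : ψ^2 + 6*(E*a^3)*ψ - 6*a^2 = 0) : ψ ≤ -2*a := by
  by_contra h
  push_neg at h
  nlinarith [mul_pos hE (pow_pos ha 3), mul_pos (mul_pos hE (pow_pos ha 3)) (neg_pos.2 hψ)]

private lemma edgb_alg2 {a a' x g : ℝ} (hgpos : 0 < g) (hxpos : 0 < x)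
    (hx6 : x < 1/6) (hgg : g^2 = 6*x*g + 6)
    (heq2 : 3*(2 + 3*x^2 + 2*x*g) * a' + a^2*(3*g^2 - 12*x*g - 3*x*g^2 + 9*x^2) = 0) :
    a' ≤ -(3/2)*a^2 ∧ -5*a^2 ≤ a' := by
  have hg3 : g ≤ 3 := by nlinarith [hgg, hxpos, hgpos, hx6]
  have hxg : x*g ≤ 1/2 := by nlinarith
  have hx2g : x^2*g ≤ 1/12 := by nlinarith
  have hD : (0:ℝ) < 2 + 3*x^2 + 2*x*g := by positivity
  constructor
  · have hP9D : 9*(2 + 3*x^2 + 2*x*g) ≤ 2*(3*g^2 - 12*x*g - 3*x*g^2 + 9*x^2) := by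
      nlinarith [hgg, hxg, hx2g, hxpos, sq_nonneg x]
    nlinarith [heq2, hD, mul_le_mul_of_nonneg_left hP9D (sq_nonneg a)]
  · have hP15D : 3*g^2 - 12*x*g - 3*x*g^2 + 9*x^2 ≤ 15*(2 + 3*x^2 + 2*x*g) := by
      nlinarith [hgg, hxg, hx2g, hxpos, sq_nonneg x, mul_pos hxpos hgpos]
    nlinarith [heq2, hD, mul_le_mul_of_nonneg_left hP15D (sq_nonneg a)]

private lemma edgb_alg {E a a' ψ : ℝ} (hE : 0 < E) (ha : 0 < a) (hψ : ψ < 0)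
    (hx6 : E * a ^ 2 < 1/6)
    (hcon : ψ^2 + 6*(E*a^3)*ψ - 6*a^2 = 0)
    (heq : (6*a + 9*E^2*a^5 - 6*E*ψ*a^2) * a' +
      (3*a*ψ^2 + 12*E*a^4*ψ - 3*E*a^3*ψ^2 + 9*E^2*a^7) = 0) :
    a' ≤ -(3/2)*a^2 ∧ -5*a^2 ≤ a' := by
  have hgpos : 0 < -ψ/a := div_pos (neg_pos.2 hψ) ha
  set g := -ψ/a with hgdef
  set x := E * a^2 with hxdef
  have hxpos : 0 < x := by positivity
  have hψeq : ψ = -(a*g) := by rw [hgdef, mul_div_assoc', mul_neg, neg_div, neg_neg, mul_div_cancel_left₀ _ ha.ne']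
  rw [hψeq] at hcon heq
  have hgg : g^2 = 6*x*g + 6 := by
    have h2 : a^2 * (g^2) = a^2 * (6*x*g+6) := by
      linear_combination hcon - 6*a^2*g*hxdef
    exact mul_left_cancel₀ (by positivity) h2
  have heq2 : 3*(2 + 3*x^2 + 2*x*g) * a' + a^2*(3*g^2 - 12*x*g - 3*x*g^2 + 9*x^2) = 0 := by
    have h2 : a * (3*(2 + 3*x^2 + 2*x*g) * a' + a^2*(3*g^2 - 12*x*g - 3*x*g^2 + 9*x^2)) = a * 0 := by
      rw [mul_zero]
      linear_combination heq + (9*a*a'*(x+E*a^2) + 6*a*g*a' - 12*a^3*g - 3*a^3*g^2 + 9*a^3*(x+E*a^2))*hxdef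
    exact mul_left_cancel₀ ha.ne' h2
  exact edgb_alg2 hgpos hxpos hx6 hgg heq2

private lemma edgb_deriv_eq {H φ : ℝ → ℝ} {I O : Set ℝ} (hO : IsOpen O) (hOI : O ⊆ I)
    (hH : ContDiffOn ℝ 1 H I) (hφ2 : ContDiffOn ℝ 2 φ I)
    (hC : ∀ t ∈ I, 3 * H t ^ 2 - 3 * Real.exp (φ t) * deriv φ t * H t ^ 3 = (deriv φ t) ^ 2 / 2)
    (hS : ∀ t ∈ I, deriv (deriv φ) t =
      -3 * H t * deriv φ t - 3 * Real.exp (φ t) * H t ^ 2 * (H t ^ 2 + deriv H t))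
    {t : ℝ} (ht : t ∈ O) :
    (6*H t + 9*Real.exp (φ t)^2*H t^5 - 6*Real.exp (φ t)*deriv φ t*H t^2) * deriv H t +
      (3*H t*(deriv φ t)^2 + 12*Real.exp (φ t)*H t^4*deriv φ t
        - 3*Real.exp (φ t)*H t^3*(deriv φ t)^2 + 9*Real.exp (φ t)^2*H t^7) = 0 := by
  have hmem : I ∈ nhds t := Filter.mem_of_superset (hO.mem_nhds ht) hOI
  have hHd : HasDerivAt H (deriv H t) t :=
    (((hH.mono hOI).contDiffAt (hO.mem_nhds ht)).differentiableAt one_ne_zero).hasDerivAt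
  have hφd : HasDerivAt φ (deriv φ t) t :=
    (((hφ2.mono hOI).contDiffAt (hO.mem_nhds ht)).differentiableAt (by norm_num)).hasDerivAt
  have hψ1 : ContDiffOn ℝ 1 (deriv φ) O :=
    (hφ2.mono hOI).deriv_of_isOpen hO (by norm_num)
  have hψd : HasDerivAt (deriv φ) (deriv (deriv φ) t) t :=
    ((hψ1.contDiffAt (hO.mem_nhds ht)).differentiableAt one_ne_zero).hasDerivAt
  have h1 := (hHd.pow 2).const_mul (3:ℝ)
  have hexp := hφd.exp
  have h2 := ((hexp.const_mul (3:ℝ)).mul hψd).mul (hHd.pow 3)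
  have h3 := (hψd.pow 2).div_const 2
  have hCder := (h1.sub h2).sub h3
  have hzero : (fun s => 3 * H s ^ 2 - 3 * Real.exp (φ s) * deriv φ s * H s ^ 3
      - (deriv φ s) ^ 2 / 2) =ᶠ[nhds t] fun _ => (0:ℝ) := by
    filter_upwards [hmem] with s hs
    have := hC s hs
    linarith
  have hC0 : HasDerivAt (fun s => 3 * H s ^ 2 - 3 * Real.exp (φ s) * deriv φ s * H s ^ 3
      - (deriv φ s) ^ 2 / 2) 0 t :=
    (hasDerivAt_const t (0:ℝ)).congr_of_eventuallyEq hzero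
  have huniq := hC0.unique hCder
  have hSt := hS t (hOI ht)
  simp only [Pi.mul_apply, Pi.pow_apply] at huniq
  linear_combination -huniq + (3*Real.exp (φ t)*H t^3 + deriv φ t) * hSt

set_option maxHeartbeats 1000000 in
private theorem edgb_main {I O : Set ℝ} (hO : IsOpen O) (hIO : I = insert 0 O)
    (hO_pos : ∀ t ∈ O, 0 < t) (hseg : ∀ t ∈ O, Ioc 0 t ⊆ O)
    (hconv : Convex ℝ I) {ε₀ : ℝ} (hε₀ : 0 < ε₀) (hε₀O : Ioo 0 ε₀ ⊆ O)
    {β : ℝ} {H φ : ℝ → ℝ} (hsys : EdGB H φ I) (hdata : NegBranchData H φ β) :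
    ∀ t ∈ I, deriv H t + (1 / 2) * H t ^ 2 < 0 := by
  obtain ⟨hH, hφ2, hC, hS⟩ := hsys
  obtain ⟨hβ, hβ6, hH0, hφ0, hψ0⟩ := hdata
  have hOI : O ⊆ I := by rw [hIO]; exact subset_insert _ _
  have hI0 : (0:ℝ) ∈ I := by rw [hIO]; exact mem_insert _ _
  have hmem_nhds : ∀ t ∈ O, I ∈ nhds t := fun t ht =>
    Filter.mem_of_superset (hO.mem_nhds ht) hOI
  have hUD : UniqueDiffOn ℝ I := by
    apply uniqueDiffOn_convex hconv
    refine ⟨ε₀/2, ?_⟩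
    have hsub : Ioo 0 ε₀ ⊆ interior I := interior_maximal (hε₀O.trans hOI) isOpen_Ioo
    exact hsub ⟨by linarith, by linarith⟩
  -- basic numerics
  have hsqrt_nonneg : (0:ℝ) ≤ Real.sqrt (9 * β ^ 6 + 6 * β ^ 2) := Real.sqrt_nonneg _
  have hψ0neg : deriv φ 0 < 0 := by
    rw [hψ0]; nlinarith [pow_pos hβ 3]
  have hβ2 : β ^ 2 < 1/6 := by
    have h6 : (Real.sqrt 6 / 6)^2 = 1/6 := by
      rw [div_pow, Real.sq_sqrt (by norm_num : (6:ℝ) ≥ 0)]; norm_num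
    calc β^2 < (Real.sqrt 6 / 6)^2 := by
            exact pow_lt_pow_left₀ hβ6 hβ.le (by norm_num)
      _ = 1/6 := h6
  -- constraint in normalized form
  have hconI : ∀ t ∈ I, (deriv φ t)^2 + 6*(Real.exp (φ t)*H t^3)*deriv φ t - 6*H t^2 = 0 := by
    intro t ht
    linear_combination (-2 : ℝ) * hC t ht
  -- key inequality at good interior points
  have hkey : ∀ t ∈ O, 0 < H t → deriv φ t < 0 → Real.exp (φ t) * H t ^ 2 < 1/6 →
      deriv H t ≤ -(3/2)*H t^2 ∧ -5*H t^2 ≤ deriv H t := by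
    intro t ht h1 h2 h3
    exact edgb_alg (exp_pos _) h1 h2 h3 (hconI t (hOI ht))
      (edgb_deriv_eq hO hOI hH hφ2 hC hS ht)
  -- continuity basics
  have hHc : ContinuousOn H I := hH.continuousOn
  have hφc : ContinuousOn φ I := hφ2.continuousOn
  have hψO : ContinuousOn (deriv φ) O :=
    (hφ2.mono hOI).continuousOn_deriv_of_isOpen hO (by norm_num)
  have hHdO : ∀ s ∈ O, HasDerivAt H (deriv H s) s := fun s hs =>
    (((hH.mono hOI).contDiffAt (hO.mem_nhds hs)).differentiableAt one_ne_zero).hasDerivAt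
  have hφdO : ∀ s ∈ O, HasDerivAt φ (deriv φ s) s := fun s hs =>
    (((hφ2.mono hOI).contDiffAt (hO.mem_nhds hs)).differentiableAt (by norm_num)).hasDerivAt
  -- limit helper at 0
  have hlim : ∀ (f g : ℝ → ℝ), ContinuousWithinAt f I 0 → (∀ s ∈ O, f s = g s) →
      Tendsto g (nhdsWithin 0 (Ioi (0:ℝ))) (nhds (f 0)) := by
    intro f g hf hfg
    have h1 : Tendsto f (nhdsWithin 0 (Ioo (0:ℝ) ε₀)) (nhds (f 0)) :=
      hf.tendsto.mono_left (nhdsWithin_mono _ (hε₀O.trans hOI))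
    rw [nhdsWithin_Ioo_eq_nhdsGT hε₀] at h1
    refine Filter.Tendsto.congr' ?_ h1
    filter_upwards [Ioo_mem_nhdsGT_of_mem (⟨le_rfl, hε₀⟩ : (0:ℝ) ∈ Ico 0 ε₀)] with s hs
    exact hfg s (hε₀O hs)
  have hOev : ∀ᶠ s in nhdsWithin 0 (Ioi (0:ℝ)), s ∈ O := by
    filter_upwards [Ioo_mem_nhdsGT_of_mem (⟨le_rfl, hε₀⟩ : (0:ℝ) ∈ Ico 0 ε₀)] with s hs
    exact hε₀O hs
  have hφd0 : DifferentiableAt ℝ φ 0 := by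
    by_contra hc
    rw [deriv_zero_of_not_differentiableAt hc] at hψ0neg
    exact lt_irrefl 0 hψ0neg
  have hψlim : Tendsto (deriv φ) (nhdsWithin 0 (Ioi (0:ℝ))) (nhds (deriv φ 0)) := by
    have h := hlim (derivWithin φ I) (deriv φ)
      ((hφ2.continuousOn_derivWithin hUD (by norm_num)) 0 hI0)
      (fun s hs => derivWithin_of_mem_nhds (hmem_nhds s hs))
    rwa [hφd0.derivWithin (hUD 0 hI0)] at h
  have hHlim : Tendsto H (nhdsWithin 0 (Ioi (0:ℝ))) (nhds β) := by
    have h := hlim H H (hHc 0 hI0) (fun _ _ => rfl)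
    rwa [hH0] at h
  have hexpc : ∀ s ∈ I, ContinuousWithinAt (fun u => Real.exp (φ u)) I s := fun s hs =>
    (Real.continuous_exp.continuousAt.comp_continuousWithinAt (hφc s hs))
  have hxlim : Tendsto (fun s => Real.exp (φ s) * H s ^ 2)
      (nhdsWithin 0 (Ioi (0:ℝ))) (nhds (β^2)) := by
    have h := hlim (fun s => Real.exp (φ s) * H s ^ 2) (fun s => Real.exp (φ s) * H s ^ 2)
      ((hexpc 0 hI0).mul ((hHc 0 hI0).pow 2)) (fun _ _ => rfl)
    have h' : Tendsto (fun s => Real.exp (φ s) * H s ^ 2) (nhdsWithin 0 (Ioi (0:ℝ)))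
        (nhds (Real.exp (φ 0) * H 0 ^ 2)) := h
    have he0 : Real.exp (φ 0) * H 0 ^ 2 = β ^ 2 := by rw [hφ0, hH0, Real.exp_zero, one_mul]
    rwa [he0] at h'
  -- Good near 0
  have hGood0 : ∀ᶠ s in nhdsWithin 0 (Ioi (0:ℝ)),
      (0 < H s ∧ deriv φ s < 0 ∧ Real.exp (φ s) * H s ^ 2 < 1/6) ∧ s ∈ O := by
    filter_upwards [hHlim.eventually (eventually_gt_nhds hβ),
      hψlim.eventually (eventually_lt_nhds hψ0neg),
      hxlim.eventually (eventually_lt_nhds hβ2), hOev] with s h1 h2 h3 h4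
    exact ⟨⟨h1, h2, h3⟩, h4⟩
  obtain ⟨ε₁, hε₁pos, hε₁⟩ : ∃ u, 0 < u ∧ ∀ s ∈ Ioo (0:ℝ) u,
      (0 < H s ∧ deriv φ s < 0 ∧ Real.exp (φ s) * H s ^ 2 < 1/6) ∧ s ∈ O := by
    rw [eventually_iff, mem_nhdsGT_iff_exists_Ioo_subset] at hGood0
    obtain ⟨u, hu, hsub⟩ := hGood0
    exact ⟨u, hu, fun s hs => hsub hs⟩
  -- the invariant propagates to all of O
  have hGoodO : ∀ t ∈ O, 0 < H t ∧ deriv φ t < 0 ∧ Real.exp (φ t) * H t ^ 2 < 1/6 := by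
    by_contra hbad
    push_neg at hbad
    obtain ⟨t₀, ht₀O, ht₀bad⟩ : ∃ t₀ ∈ O,
        ¬(0 < H t₀ ∧ deriv φ t₀ < 0 ∧ Real.exp (φ t₀) * H t₀ ^ 2 < 1/6) := by
      obtain ⟨t₀, h1, h2⟩ := hbad
      exact ⟨t₀, h1, fun hc => absurd hc.2.2 (not_lt.2 (h2 hc.1 hc.2.1))⟩
    have ht₀pos : 0 < t₀ := hO_pos t₀ ht₀O
    set B := {t : ℝ | t ∈ Ioc 0 t₀ ∧
      ¬(0 < H t ∧ deriv φ t < 0 ∧ Real.exp (φ t) * H t ^ 2 < 1/6)} with hBdef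
    have hBne : B.Nonempty := ⟨t₀, ⟨ht₀pos, le_rfl⟩, ht₀bad⟩
    have hBbd : BddBelow B := ⟨0, fun t ht => ht.1.1.le⟩
    set T := sInf B with hTdef
    have hTmem : ∀ t ∈ B, T ≤ t := fun t ht => csInf_le hBbd ht
    have hε₁T : ε₁ ≤ T := by
      apply le_csInf hBne
      intro t ht
      by_contra h
      push_neg at h
      exact ht.2 (hε₁ t ⟨ht.1.1, h⟩).1
    have hTpos : 0 < T := lt_of_lt_of_le hε₁pos hε₁T
    have hTle : T ≤ t₀ := csInf_le hBbd ⟨⟨ht₀pos, le_rfl⟩, ht₀bad⟩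
    have hIocO : Ioc 0 t₀ ⊆ O := hseg t₀ ht₀O
    have hTO : T ∈ O := hIocO ⟨hTpos, hTle⟩
    have hGoodlt : ∀ s, 0 < s → s < T →
        0 < H s ∧ deriv φ s < 0 ∧ Real.exp (φ s) * H s ^ 2 < 1/6 := by
      intro s hs hsT
      by_contra hns
      exact absurd (hTmem s ⟨⟨hs, (hsT.le.trans hTle)⟩, hns⟩) (not_le.2 hsT)
    have hO_of_le : ∀ s, 0 < s → s ≤ T → s ∈ O := fun s hs hsT =>
      hIocO ⟨hs, hsT.trans hTle⟩
    have hIccI : Icc 0 T ⊆ I := by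
      intro s hs
      rcases eq_or_lt_of_le hs.1 with h | h
      · rw [← h]; exact hI0
      · exact hOI (hO_of_le s h hs.2)
    -- x = e^φ H² is antitone on [0, T]
    have hxmono : AntitoneOn (fun s => Real.exp (φ s) * H s ^ 2) (Icc 0 T) := by
      apply antitoneOn_of_deriv_nonpos (convex_Icc 0 T)
      · exact ((hφc.mono hIccI).rexp.mul ((hHc.mono hIccI).pow 2))
      · rw [interior_Icc]
        intro s hs
        have hsO : s ∈ O := hO_of_le s hs.1 hs.2.le
        exact (((hφdO s hsO).exp.mul ((hHdO s hsO).pow 2)).differentiableAt).differentiableWithinAt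
      · rw [interior_Icc]
        intro s hs
        have hsO : s ∈ O := hO_of_le s hs.1 hs.2.le
        obtain ⟨h1, h2, h3⟩ := hGoodlt s hs.1 hs.2
        have hH' := (hkey s hsO h1 h2 h3).1
        have hd := ((hφdO s hsO).exp.mul ((hHdO s hsO).pow 2)).deriv
        rw [show (fun s => Real.exp (φ s) * H s ^ 2) = (fun x => Real.exp (φ x)) * H ^ 2 from rfl, hd]
        have he : 0 < Real.exp (φ s) := exp_pos _
        have hneg : deriv H s < 0 := by nlinarith
        norm_num
        nlinarith [pow_pos h1 2, mul_pos he (pow_pos h1 2), mul_pos he h1]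
    have hxT : Real.exp (φ T) * H T ^ 2 ≤ β ^ 2 := by
      have h := hxmono ⟨le_rfl, hTpos.le⟩ ⟨hTpos.le, le_rfl⟩ hTpos.le
      simpa [hφ0, hH0] using h
    have hxT6 : Real.exp (φ T) * H T ^ 2 < 1/6 := lt_of_le_of_lt hxT hβ2
    -- lower bound for H on (0, T)
    have hM : (0:ℝ) < 1/β + 5*T := by positivity
    have hHlower : ∀ s, 0 < s → s < T → (1/β + 5*T)⁻¹ ≤ H s := by
      intro s hs hsT
      have hIccsI : Icc 0 s ⊆ I := fun u hu =>
        hIccI ⟨hu.1, hu.2.trans hsT.le⟩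
      have hHposIcc : ∀ u ∈ Icc 0 s, 0 < H u := by
        intro u hu
        rcases eq_or_lt_of_le hu.1 with h | h
        · rw [← h, hH0]; exact hβ
        · exact (hGoodlt u h (lt_of_le_of_lt hu.2 hsT)).1
      have hzmono : AntitoneOn (fun u => (H u)⁻¹ - 5*u) (Icc 0 s) := by
        apply antitoneOn_of_deriv_nonpos (convex_Icc 0 s)
        · exact ((hHc.mono hIccsI).inv₀ (fun u hu => (hHposIcc u hu).ne')).sub
            (continuous_const.mul continuous_id).continuousOn
        · rw [interior_Icc]
          intro u hu
          have huO : u ∈ O := hO_of_le u hu.1 (hu.2.trans hsT).le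
          have hne : H u ≠ 0 := (hHposIcc u ⟨hu.1.le, hu.2.le⟩).ne'
          have hd5 : HasDerivAt (fun v : ℝ => 5*v) 5 u := by
            simpa using (hasDerivAt_id u).const_mul (5:ℝ)
          exact ((((hHdO u huO).inv hne).sub hd5).differentiableAt).differentiableWithinAt
        · rw [interior_Icc]
          intro u hu
          have huO : u ∈ O := hO_of_le u hu.1 (hu.2.trans hsT).le
          have hupos : 0 < H u := hHposIcc u ⟨hu.1.le, hu.2.le⟩
          obtain ⟨h1, h2, h3⟩ := hGoodlt u hu.1 (hu.2.trans hsT)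
          have hH' := (hkey u huO h1 h2 h3).2
          have hd5 : HasDerivAt (fun v : ℝ => 5*v) 5 u := by
            simpa using (hasDerivAt_id u).const_mul (5:ℝ)
          have hd := (((hHdO u huO).inv hupos.ne').sub hd5).deriv
          rw [show (fun u => (H u)⁻¹ - 5 * u) = H⁻¹ - (fun v => 5 * v) from rfl, hd]
          have h4 : 0 < H u ^ 2 := pow_pos hupos 2
          rw [sub_nonpos, div_le_iff₀ h4]
          linarith
      have hz : (H s)⁻¹ - 5*s ≤ (H 0)⁻¹ - 5*0 :=
        hzmono (⟨le_rfl, hs.le⟩ : (0:ℝ) ∈ Icc 0 s) ⟨hs.le, le_rfl⟩ hs.le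
      rw [hH0] at hz
      have hHs : 0 < H s := (hGoodlt s hs hsT).1
      have h5 : (H s)⁻¹ ≤ 1/β + 5*T := by
        have h51 : (5:ℝ)*s ≤ 5*T := by linarith
        have h52 : β⁻¹ = 1/β := (one_div β).symm
        have h53 : (H s)⁻¹ - 5*s ≤ β⁻¹ - 5*0 := hz
        linarith
      have h6 : 1 ≤ H s * (1/β + 5*T) := by
        have h61 := mul_le_mul_of_nonneg_left h5 hHs.le
        rwa [mul_inv_cancel₀ hHs.ne'] at h61
      have h7 := mul_le_mul_of_nonneg_left h6 (inv_pos.2 hM).le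
      rw [mul_one] at h7
      calc (1/β+5*T)⁻¹ ≤ (1/β+5*T)⁻¹ * (H s * (1/β+5*T)) := h7
        _ = H s := by field_simp
    -- H T > 0
    have hNB : (nhdsWithin T (Ioo 0 T)).NeBot := by
      rw [← mem_closure_iff_nhdsWithin_neBot, closure_Ioo hTpos.ne]
      exact ⟨hTpos.le, le_rfl⟩
    have hHcT : ContinuousAt H T :=
      ((hH.mono hOI).contDiffAt (hO.mem_nhds hTO)).continuousAt
    have hHT : 0 < H T := by
      have hTend : Tendsto H (nhdsWithin T (Ioo 0 T)) (nhds (H T)) :=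
        hHcT.continuousWithinAt.tendsto
      refine lt_of_lt_of_le (inv_pos.2 hM) (ge_of_tendsto hTend ?_)
      exact eventually_of_mem self_mem_nhdsWithin (fun s hs => hHlower s hs.1 hs.2)
    -- deriv φ T < 0
    have hψcT : ContinuousAt (deriv φ) T := hψO.continuousAt (hO.mem_nhds hTO)
    have hψT : deriv φ T < 0 := by
      have hca : ContinuousAt (fun s => deriv φ s + 2 * H s) T :=
        hψcT.add (continuousAt_const.mul hHcT)
      have hTend : Tendsto (fun s => deriv φ s + 2 * H s) (nhdsWithin T (Ioo 0 T))
          (nhds (deriv φ T + 2 * H T)) := hca.continuousWithinAt.tendsto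
      have hle : deriv φ T + 2 * H T ≤ 0 := by
        refine le_of_tendsto hTend (eventually_of_mem self_mem_nhdsWithin ?_)
        intro s hs
        obtain ⟨h1, h2, h3⟩ := hGoodlt s hs.1 hs.2
        have := edgb_psi_le (exp_pos (φ s)) h1 h2 (hconI s (hOI (hO_of_le s hs.1 hs.2.le)))
        linarith
      linarith
    -- Good T, and openness gives contradiction
    have hGoodT : (0 < H T ∧ deriv φ T < 0 ∧ Real.exp (φ T) * H T ^ 2 < 1/6) :=
      ⟨hHT, hψT, hxT6⟩
    have hxcT : ContinuousAt (fun s => Real.exp (φ s) * H s ^ 2) T :=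
      ((Real.continuous_exp.continuousAt.comp
        (((hφ2.mono hOI).contDiffAt (hO.mem_nhds hTO)).continuousAt)).mul
        (hHcT.pow 2))
    have hev : ∀ᶠ s in nhds T, (0 < H s ∧ deriv φ s < 0 ∧ Real.exp (φ s) * H s ^ 2 < 1/6) := by
      filter_upwards [hHcT.eventually (eventually_gt_nhds hHT),
        hψcT.eventually (eventually_lt_nhds hψT),
        hxcT.eventually (eventually_lt_nhds hxT6)] with s h1 h2 h3
      exact ⟨h1, h2, h3⟩
    obtain ⟨δ, hδpos, hδ⟩ := Metric.eventually_nhds_iff.1 hev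
    obtain ⟨t₁, ht₁B, ht₁lt⟩ := exists_lt_of_csInf_lt hBne (lt_add_of_pos_right T hδpos)
    refine ht₁B.2 (hδ ?_)
    rw [Real.dist_eq, abs_of_nonneg (sub_nonneg.2 (hTmem t₁ ht₁B))]
    linarith
  -- conclusion at interior points
  have hfinalO : ∀ t ∈ O, deriv H t + (1 / 2) * H t ^ 2 < 0 := by
    intro t ht
    obtain ⟨h1, h2, h3⟩ := hGoodO t ht
    have := (hkey t ht h1 h2 h3).1
    nlinarith [pow_pos h1 2]
  -- boundary point t = 0
  have hL : ∃ L, Tendsto (deriv H) (nhdsWithin 0 (Ioi (0:ℝ))) (nhds L) ∧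
      L = derivWithin H I 0 :=
    ⟨derivWithin H I 0,
      hlim (derivWithin H I) (deriv H) ((hH.continuousOn_derivWithin hUD le_rfl) 0 hI0)
        (fun s hs => derivWithin_of_mem_nhds (hmem_nhds s hs)), rfl⟩
  obtain ⟨L, hLlim, hLdef⟩ := hL
  have hLle : L ≤ -(3/2)*β^2 := by
    have ht1 : Tendsto (fun s => deriv H s + (3/2)*H s^2) (nhdsWithin 0 (Ioi (0:ℝ)))
        (nhds (L + (3/2)*β^2)) :=
      hLlim.add (((hHlim.pow 2)).const_mul (3/2))
    have h0 : L + (3/2)*β^2 ≤ 0 := by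
      refine le_of_tendsto ht1 ?_
      filter_upwards [hGood0] with s hs
      have := (hkey s hs.2 hs.1.1 hs.1.2.1 hs.1.2.2).1
      linarith
    linarith
  have hzero_case : deriv H 0 + (1 / 2) * H 0 ^ 2 < 0 := by
    by_cases hdH0 : DifferentiableAt ℝ H 0
    · have hdw : derivWithin H I 0 = deriv H 0 := hdH0.derivWithin (hUD 0 hI0)
      rw [hH0]
      rw [hdw] at hLdef
      nlinarith [pow_pos hβ 2, hLle, hLdef.symm ▸ hLle]
    · exfalso
      have hd0 : deriv H 0 = 0 := deriv_zero_of_not_differentiableAt hdH0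
      have hS0 := hS 0 hI0
      rw [hd0, hφ0, hH0, Real.exp_zero] at hS0
      have hcpos : 0 < deriv (deriv φ) 0 := by
        rw [hS0, hψ0]
        nlinarith [pow_pos hβ 3, pow_pos hβ 4, pow_pos hβ 2, hβ]
      have hdψ0 : DifferentiableAt ℝ (deriv φ) 0 := by
        by_contra hc
        rw [deriv_zero_of_not_differentiableAt hc] at hcpos
        exact lt_irrefl 0 hcpos
      have hagree : ∀ s ∈ I, derivWithin φ I s = deriv φ s := by
        intro s hs
        rw [hIO, mem_insert_iff] at hs
        rcases hs with rfl | hs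
        · exact hφd0.derivWithin (hUD 0 hI0)
        · exact derivWithin_of_mem_nhds (hmem_nhds s hs)
      have hW : HasDerivWithinAt (derivWithin φ I) (deriv (deriv φ) 0) I 0 :=
        (hdψ0.hasDerivAt.hasDerivWithinAt).congr hagree (hagree 0 hI0)
      have hc_eq : derivWithin (derivWithin φ I) I 0 = deriv (deriv φ) 0 :=
        hW.derivWithin (hUD 0 hI0)
      have hcont2 : ContinuousWithinAt (derivWithin (derivWithin φ I) I) I 0 :=
        ((hφ2.derivWithin hUD (by norm_num)).continuousOn_derivWithin hUD le_rfl) 0 hI0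
      have heqO : ∀ s ∈ O, derivWithin (derivWithin φ I) I s = deriv (deriv φ) s := by
        intro s hs
        rw [derivWithin_of_mem_nhds (hmem_nhds s hs)]
        apply Filter.EventuallyEq.deriv_eq
        filter_upwards [hO.mem_nhds hs] with u hu
        exact hagree u (hOI hu)
      have h2lim : Tendsto (deriv (deriv φ)) (nhdsWithin 0 (Ioi (0:ℝ)))
          (nhds (deriv (deriv φ) 0)) := by
        have h := hlim _ _ hcont2 heqO
        rwa [hc_eq] at h
      have hexplim : Tendsto (fun s => Real.exp (φ s)) (nhdsWithin 0 (Ioi (0:ℝ))) (nhds 1) := by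
        have h := hlim (fun s => Real.exp (φ s)) (fun s => Real.exp (φ s))
          (hexpc 0 hI0) (fun _ _ => rfl)
        have h' : Tendsto (fun s => Real.exp (φ s)) (nhdsWithin 0 (Ioi (0:ℝ)))
            (nhds (Real.exp (φ 0))) := h
        have he0 : Real.exp (φ 0) = 1 := by rw [hφ0, Real.exp_zero]
        rwa [he0] at h'
      have h2lim' : Tendsto (deriv (deriv φ)) (nhdsWithin 0 (Ioi (0:ℝ)))
          (nhds (-3*β*(deriv φ 0) - 3*1*β^2*(β^2 + L))) := by
        have hbig : Tendsto (fun s => -3 * H s * deriv φ s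
            - 3 * Real.exp (φ s) * H s ^ 2 * (H s ^ 2 + deriv H s))
            (nhdsWithin 0 (Ioi (0:ℝ))) (nhds (-3*β*(deriv φ 0) - 3*1*β^2*(β^2 + L))) := by
          exact (((tendsto_const_nhds (x := (-3:ℝ)))
              |>.mul hHlim).mul hψlim).sub
            ((((tendsto_const_nhds (x := (3:ℝ))).mul hexplim).mul (hHlim.pow 2)).mul
              ((hHlim.pow 2).add hLlim))
        refine Filter.Tendsto.congr' ?_ hbig
        filter_upwards [hOev] with s hs
        exact (hS s (hOI hs)).symm
      have huniq := tendsto_nhds_unique h2lim h2lim'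
      rw [hS0] at huniq
      have h9 : 3*1*β^2*(β^2+0) = 3*1*β^2*(β^2+L) := by linarith [huniq]
      have h10 : β^2 + 0 = β^2 + L :=
        mul_left_cancel₀ (show (3*1*β^2:ℝ) ≠ 0 by positivity) h9
      have hL0 : L = 0 := by linarith
      rw [hL0] at hLle
      nlinarith [pow_pos hβ 2]
  intro t ht
  rw [hIO, mem_insert_iff] at ht
  rcases ht with rfl | ht
  · exact hzero_case
  · exact hfinalO t ht


/-- If `(H, φ)` solves the EdGB FLRW system on `[0, b)` (with `b ∈ (0, +∞]`) with
the negative-branch initial data with parameter `β`, then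
`D₂(t) = H'(t) + (1/2)H(t)² < 0` for all `t ∈ [0, b)`. -/
theorem stmt_9 (b : EReal) (hb : 0 < b) (β : ℝ) (H φ : ℝ → ℝ)
    (hsys : EdGB H φ {t : ℝ | 0 ≤ t ∧ (t : EReal) < b})
    (hdata : NegBranchData H φ β) :
    ∀ t : ℝ, 0 ≤ t → (t : EReal) < b →
      deriv H t + (1 / 2) * H t ^ 2 < 0 := by
  induction b with
  | bot => exact absurd hb (by simp)
  | coe r =>
    have hr : (0:ℝ) < r := by exact_mod_cast hb
    have hset : {t : ℝ | 0 ≤ t ∧ (t : EReal) < (r:EReal)} = Set.Ico 0 r := by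
      ext t
      simp [Set.mem_Ico, EReal.coe_lt_coe_iff]
    rw [hset] at hsys
    have hIO : Set.Ico (0:ℝ) r = insert 0 (Set.Ioo 0 r) := by
      ext t
      simp only [Set.mem_Ico, Set.mem_insert_iff, Set.mem_Ioo]
      constructor
      · rintro ⟨h1, h2⟩
        rcases eq_or_lt_of_le h1 with h | h
        · exact Or.inl h.symm
        · exact Or.inr ⟨h, h2⟩
      · rintro (rfl | ⟨h1, h2⟩)
        · exact ⟨le_rfl, hr⟩
        · exact ⟨h1.le, h2⟩
    have hmain := edgb_main (O := Set.Ioo 0 r) isOpen_Ioo hIO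
      (fun t ht => ht.1) (fun t ht s hs => ⟨hs.1, lt_of_le_of_lt hs.2 ht.2⟩)
      (convex_Ico 0 r) hr (subset_refl _) hsys hdata
    intro t ht1 ht2
    exact hmain t ⟨ht1, by exact_mod_cast ht2⟩
  | top =>
    have hset : {t : ℝ | 0 ≤ t ∧ (t : EReal) < ⊤} = Set.Ici 0 := by
      ext t
      simp [EReal.coe_lt_top]
    rw [hset] at hsys
    have hIO : Set.Ici (0:ℝ) = insert 0 (Set.Ioi 0) := by
      ext t
      simp only [Set.mem_Ici, Set.mem_insert_iff, Set.mem_Ioi]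
      constructor
      · intro h1
        rcases eq_or_lt_of_le h1 with h | h
        · exact Or.inl h.symm
        · exact Or.inr h
      · rintro (rfl | h)
        · exact le_rfl
        · exact h.le
    have hmain := edgb_main (O := Set.Ioi 0) isOpen_Ioi hIO
      (fun t ht => ht) (fun t ht s hs => hs.1)
      (convex_Ici 0) one_pos (fun s hs => hs.1) hsys hdata
    intro t ht1 _
    exact hmain t ht1
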